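/- Let g be a finite-dimensional complex nilpotent Lie algebra such that every basis of g contains an element x with ad(x)^4 ≠ 0 (i.e., g is not a pre-Engel-4 Lie algebra). Then g admits no periodic prederivation. -/

import Mathlib

/-- A prederivation of a Lie algebra. -/
def IsPrederivation {L : Type*} [LieRing L] [LieAlgebra ℂ L] (P : L →ₗ[ℂ] L) : Prop :=
  ∀ x y z : L, P ⁅x, ⁅y, z⁆⁆ = ⁅P x, ⁅y, z⁆⁆ + ⁅x, ⁅P y, z⁆⁆ + ⁅x, ⁅y, P z⁆⁆

theorem no_periodic_prederivation_of_not_preEngel4 (L : Type*) [LieRing L]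
    [LieAlgebra ℂ L] [FiniteDimensional ℂ L] [LieModule.IsNilpotent L L]
    (h : ∀ (ι : Type) (b : Module.Basis ι ℂ L), ∃ i : ι, (LieAlgebra.ad ℂ L (b i)) ^ 4 ≠ 0) :
    ¬ ∃ P : L →ₗ[ℂ] L, IsPrederivation P ∧ ∃ m : ℕ, 1 ≤ m ∧ P ^ m = 1 := by
  rintro ⟨P, hP, m, hm, hPm⟩
  let Q : Module.End ℂ L := P
  have hQ : ∀ v, Q v = P v := fun _ => rfl
  have hQm : Q ^ m = 1 := hPm
  have hm0 : m ≠ 0 := by omega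
  -- every eigenvalue of P has norm 1
  have hroot : ∀ (μ : ℂ) (v : L), v ≠ 0 → P v = μ • v → ‖μ‖ = 1 := by
    intro μ v hv hμ
    have hev : Q.HasEigenvector μ v := ⟨Module.End.mem_eigenspace_iff.mpr hμ, hv⟩
    have h1 : (Q ^ m) v = μ ^ m • v := hev.pow_apply m
    rw [hQm] at h1
    have h2 : (μ ^ m - 1) • v = 0 := by
      rw [sub_smul, one_smul, ← h1, Module.End.one_apply, sub_self]
    have h3 : μ ^ m = 1 := by
      rcases smul_eq_zero.mp h2 with h' | h'
      · exact sub_eq_zero.mp h'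
      · exact absurd h' hv
    exact Complex.norm_eq_one_of_pow_eq_one h3 hm0
  -- the set of eigenvectors
  set S : Set L := {v : L | ∃ μ : ℂ, P v = μ • v} with hS
  -- P is semisimple, so eigenvectors span
  have hss : Q.IsSemisimple := by
    apply Module.End.isSemisimple_of_squarefree_aeval_eq_zero
      (p := Polynomial.X ^ m - 1)
    · exact (Polynomial.X_pow_sub_one_separable_iff.mpr
        (by exact_mod_cast hm0)).squarefree
    · simp [map_sub, map_pow, hQm]
  have htop : ⨆ μ : ℂ, Q.eigenspace μ = ⊤ := by
    have h1 := Module.End.iSup_maxGenEigenspace_eq_top Q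
    simp_rw [hss.isFinitelySemisimple.maxGenEigenspace_eq_eigenspace] at h1
    exact h1
  have hspan : Submodule.span ℂ S = ⊤ := by
    rw [eq_top_iff, ← htop]
    apply iSup_le
    intro μ v hv
    exact Submodule.subset_span ⟨μ, Module.End.mem_eigenspace_iff.mp hv⟩
  -- the prederivation identity specialized to an eigenvector x
  have key : ∀ (x : L) (α : ℂ), P x = α • x → ∀ v : L,
      P ⁅x, ⁅x, v⁆⁆ = (2 * α) • ⁅x, ⁅x, v⁆⁆ + ⁅x, ⁅x, P v⁆⁆ := by
    intro x α hx v
    rw [hP x x v, hx]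
    simp only [smul_lie, lie_smul]
    module
  -- every eigenvector x satisfies ad(x)^4 = 0
  have had : ∀ x : L, x ∈ S → (LieAlgebra.ad ℂ L x) ^ 4 = 0 := by
    rintro x ⟨α, hx⟩
    by_cases hx0 : x = 0
    · subst hx0
      have : LieAlgebra.ad ℂ L (0 : L) = 0 := by
        ext v; simp
      rw [this]
      simp [pow_succ]
    have hα : ‖α‖ = 1 := hroot α x hx0 hx
    apply LinearMap.ext_on hspan
    rintro w ⟨β, hw⟩
    by_cases hw0 : w = 0
    · subst hw0; simp
    have hβ : ‖β‖ = 1 := hroot β w hw0 hw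
    have e1 : P ⁅x, ⁅x, w⁆⁆ = (2 * α + β) • ⁅x, ⁅x, w⁆⁆ := by
      rw [key x α hx w, hw, lie_smul, lie_smul, add_smul]
    have e2 : P ⁅x, ⁅x, ⁅x, ⁅x, w⁆⁆⁆⁆ = (4 * α + β) • ⁅x, ⁅x, ⁅x, ⁅x, w⁆⁆⁆⁆ := by
      rw [key x α hx ⁅x, ⁅x, w⁆⁆, e1, lie_smul, lie_smul]
      module
    have hu0 : ⁅x, ⁅x, ⁅x, ⁅x, w⁆⁆⁆⁆ = (0 : L) := by
      by_contra hu0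
      have h41 : ‖4 * α + β‖ = 1 := hroot _ _ hu0 e2
      have hle : ‖(4 * α + β) + -β‖ ≤ ‖4 * α + β‖ + ‖-β‖ := norm_add_le _ _
      have heq : (4 * α + β) + -β = 4 * α := by ring
      rw [heq, norm_neg, h41, hβ, norm_mul, hα] at hle
      have h4 : ‖(4 : ℂ)‖ = 4 := by norm_num
      rw [h4] at hle
      linarith
    have hcalc : ((LieAlgebra.ad ℂ L x) ^ 4) w = ⁅x, ⁅x, ⁅x, ⁅x, w⁆⁆⁆⁆ := by
      simp [pow_succ, Module.End.mul_apply, LieAlgebra.ad_apply]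
    show ((LieAlgebra.ad ℂ L x) ^ 4) w = (0 : Module.End ℂ L) w
    rw [hcalc, hu0]
    simp
  -- build a basis of eigenvectors, contradicting h
  obtain ⟨s, hsub, hsp, hli⟩ := exists_linearIndependent ℂ S
  rw [hspan] at hsp
  haveI := hli.setFinite.fintype
  let B : Module.Basis s ℂ L := Module.Basis.mk hli (by rw [Subtype.range_coe, hsp])
  obtain ⟨i, hi⟩ := h (Fin (Fintype.card s)) (B.reindex (Fintype.equivFin s))
  apply hi
  have hB : (B.reindex (Fintype.equivFin s)) i = (((Fintype.equivFin s).symm i : s) : L) := by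
    simp [B, Module.Basis.reindex_apply, Module.Basis.coe_mk]
  rw [hB]
  exact had _ (hsub (Subtype.mem _))
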